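/- Let μ > 0 and h < 0, and consider the diagonal metric on ℝ² with coefficients E(x,y) = 2/(x² + y² − 2h)² and G(x,y) = 2/(μ(x² + y² − 2h)²) (note x² + y² − 2h > 0 everywhere since h < 0). Then the Gaussian curvature, given by the classical formula for orthogonal metrics K = −(1/(2√(EG)))·[ ∂/∂x( (∂G/∂x)/√(EG) ) + ∂/∂y( (∂E/∂y)/√(EG) ) ], satisfies K(x,y) = −(1−μ)(x² − y²) − 2h(1+μ) for all (x,y) ∈ ℝ². In particular K is a constant function on ℝ² if and only if μ = 1, in which case K ≡ −4h. -/

import Mathlib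

/-- First metric coefficient `E(x,y) = 2/(x² + y² − 2h)²`. -/
noncomputable def Ecoef (h x y : ℝ) : ℝ := 2 / (x ^ 2 + y ^ 2 - 2 * h) ^ 2

/-- Second metric coefficient `G(x,y) = 2/(μ(x² + y² − 2h)²)`. -/
noncomputable def Gcoef (μ h x y : ℝ) : ℝ := 2 / (μ * (x ^ 2 + y ^ 2 - 2 * h) ^ 2)

/-- Gaussian curvature of the orthogonal metric `ds² = E dx² + G dy²` by the
classical formula `K = −(1/(2√(EG)))·[∂ₓ((∂ₓG)/√(EG)) + ∂ᵧ((∂ᵧE)/√(EG))]`. -/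
noncomputable def gaussCurv (μ h x y : ℝ) : ℝ :=
  -(1 / (2 * Real.sqrt (Ecoef h x y * Gcoef μ h x y)))
    * (deriv (fun x' => (deriv (fun x'' => Gcoef μ h x'' y) x')
        / Real.sqrt (Ecoef h x' y * Gcoef μ h x' y)) x
      + deriv (fun y' => (deriv (fun y'' => Ecoef h x y'') y')
        / Real.sqrt (Ecoef h x y' * Gcoef μ h x y')) y)

/-- **Gaussian curvature of the metric
`g = (2/(x² + y² − 2h)²)·diag(1, 1/μ)`:** one has
`K(x,y) = −(1−μ)(x² − y²) − 2h(1+μ)`; in particular `K` is constant iff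
`μ = 1`, in which case `K ≡ −4h`. -/
lemma qpos {h : ℝ} (hh : h < 0) (x y : ℝ) : 0 < x ^ 2 + y ^ 2 - 2 * h := by
  nlinarith [sq_nonneg x, sq_nonneg y]

lemma sqrtEG {μ h : ℝ} (hμ : 0 < μ) (hh : h < 0) (x y : ℝ) :
    Real.sqrt (Ecoef h x y * Gcoef μ h x y)
      = 2 / (Real.sqrt μ * (x ^ 2 + y ^ 2 - 2 * h) ^ 2) := by
  have hq := qpos hh x y
  have hs : 0 < Real.sqrt μ := Real.sqrt_pos.2 hμ
  have hsq : (Real.sqrt μ) ^ 2 = μ := Real.sq_sqrt hμ.le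
  have key : Ecoef h x y * Gcoef μ h x y
      = (2 / (Real.sqrt μ * (x ^ 2 + y ^ 2 - 2 * h) ^ 2)) ^ 2 := by
    unfold Ecoef Gcoef
    field_simp
    simp only [mul_pow, hsq]
  rw [key, Real.sqrt_sq (by positivity)]

lemma derivGx {μ h : ℝ} (hμ : 0 < μ) (hh : h < 0) (x y : ℝ) :
    deriv (fun x' => Gcoef μ h x' y) x
      = (-8 * x) / (μ * (x ^ 2 + y ^ 2 - 2 * h) ^ 3) := by
  have hq := qpos hh x y
  have hne : μ * (x ^ 2 + y ^ 2 - 2 * h) ^ 2 ≠ 0 := by positivity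
  have hv : HasDerivAt (fun x' => μ * (x' ^ 2 + y ^ 2 - 2 * h) ^ 2)
      (μ * ((2:ℕ) * (x ^ 2 + y ^ 2 - 2 * h) ^ 1 * ((2:ℕ) * x ^ 1))) x := by
    exact ((((hasDerivAt_pow 2 x).add_const (y ^ 2)).sub_const (2 * h)).pow 2).const_mul μ
  have hG := (hasDerivAt_const x (2:ℝ)).div hv hne
  simp only [Gcoef]
  rw [show (fun x' => 2 / (μ * (x' ^ 2 + y ^ 2 - 2 * h) ^ 2)) = ((fun _ => (2:ℝ)) / fun x' => μ * (x' ^ 2 + y ^ 2 - 2 * h) ^ 2) from rfl, hG.deriv]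
  field_simp
  ring

lemma derivEy {h : ℝ} (hh : h < 0) (x y : ℝ) :
    deriv (fun y' => Ecoef h x y') y
      = (-8 * y) / ((x ^ 2 + y ^ 2 - 2 * h) ^ 3) := by
  have hq := qpos hh x y
  have hne : (x ^ 2 + y ^ 2 - 2 * h) ^ 2 ≠ 0 := by positivity
  have h1 : HasDerivAt (fun y' : ℝ => x ^ 2 + y' ^ 2 - 2 * h) ((2:ℕ) * y ^ 1) y := by
    exact (((hasDerivAt_pow 2 y).const_add (x ^ 2)).sub_const (2 * h))
  have hv := h1.pow 2
  have hE := (hasDerivAt_const y (2:ℝ)).div hv hne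
  simp only [Ecoef]
  rw [show (fun y' => 2 / (x ^ 2 + y' ^ 2 - 2 * h) ^ 2) = ((fun _ => (2:ℝ)) / (fun y' => x ^ 2 + y' ^ 2 - 2 * h) ^ 2) from rfl, hE.deriv]
  simp only [Pi.pow_apply]
  field_simp
  ring

lemma Dx {μ h : ℝ} (hμ : 0 < μ) (hh : h < 0) (x y : ℝ) :
    deriv (fun x' => (deriv (fun x'' => Gcoef μ h x'' y) x')
        / Real.sqrt (Ecoef h x' y * Gcoef μ h x' y)) x
      = (8 * x ^ 2 - 4 * (x ^ 2 + y ^ 2 - 2 * h))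
          / (Real.sqrt μ * (x ^ 2 + y ^ 2 - 2 * h) ^ 2) := by
  have hs : 0 < Real.sqrt μ := Real.sqrt_pos.2 hμ
  have hsq : (Real.sqrt μ) ^ 2 = μ := Real.sq_sqrt hμ.le
  have hq := qpos hh x y
  have feq : (fun x' => (deriv (fun x'' => Gcoef μ h x'' y) x')
        / Real.sqrt (Ecoef h x' y * Gcoef μ h x' y))
      = fun x' => (-4 * x') / (Real.sqrt μ * (x' ^ 2 + y ^ 2 - 2 * h)) := by
    funext x'
    have hq' := qpos hh x' y
    rw [derivGx hμ hh, sqrtEG hμ hh]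
    have h3 : Real.sqrt μ ^ 3 = Real.sqrt μ * μ := by rw [pow_succ, hsq, mul_comm]
    field_simp
    ring_nf
    simp only [h3, hsq]
    try ring
  rw [feq]
  have hne : Real.sqrt μ * (x ^ 2 + y ^ 2 - 2 * h) ≠ 0 := by positivity
  have hu : HasDerivAt (fun x' : ℝ => -4 * x') (-4) x := by
    simpa using (hasDerivAt_id x).const_mul (-4 : ℝ)
  have hv : HasDerivAt (fun x' => Real.sqrt μ * (x' ^ 2 + y ^ 2 - 2 * h))
      (Real.sqrt μ * ((2:ℕ) * x ^ 1)) x :=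
    (((hasDerivAt_pow 2 x).add_const (y ^ 2)).sub_const (2 * h)).const_mul (Real.sqrt μ)
  rw [show (fun x' => -4 * x' / (Real.sqrt μ * (x' ^ 2 + y ^ 2 - 2 * h))) = ((fun x' : ℝ => -4 * x') / fun x' => Real.sqrt μ * (x' ^ 2 + y ^ 2 - 2 * h)) from rfl, (hu.div hv hne).deriv]
  have h3 : Real.sqrt μ ^ 3 = Real.sqrt μ * μ := by rw [pow_succ, hsq, mul_comm]
  field_simp
  try ring_nf
  try simp only [h3, hsq]
  try ring

lemma Dy {μ h : ℝ} (hμ : 0 < μ) (hh : h < 0) (x y : ℝ) :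
    deriv (fun y' => (deriv (fun y'' => Ecoef h x y'') y')
        / Real.sqrt (Ecoef h x y' * Gcoef μ h x y')) y
      = Real.sqrt μ * (8 * y ^ 2 - 4 * (x ^ 2 + y ^ 2 - 2 * h))
          / ((x ^ 2 + y ^ 2 - 2 * h) ^ 2) := by
  have hs : 0 < Real.sqrt μ := Real.sqrt_pos.2 hμ
  have hsq : (Real.sqrt μ) ^ 2 = μ := Real.sq_sqrt hμ.le
  have hq := qpos hh x y
  have h3 : Real.sqrt μ ^ 3 = Real.sqrt μ * μ := by rw [pow_succ, hsq, mul_comm]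
  have feq : (fun y' => (deriv (fun y'' => Ecoef h x y'') y')
        / Real.sqrt (Ecoef h x y' * Gcoef μ h x y'))
      = fun y' => (-4 * Real.sqrt μ * y') / (x ^ 2 + y' ^ 2 - 2 * h) := by
    funext y'
    have hq' := qpos hh x y'
    rw [derivEy hh, sqrtEG hμ hh]
    field_simp
    try ring_nf
    try simp only [h3, hsq]
    try ring
  rw [feq]
  have hne : (x ^ 2 + y ^ 2 - 2 * h) ≠ 0 := ne_of_gt hq
  have hu : HasDerivAt (fun y' : ℝ => -4 * Real.sqrt μ * y') (-4 * Real.sqrt μ) y := by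
    simpa using (hasDerivAt_id y).const_mul (-4 * Real.sqrt μ)
  have hv : HasDerivAt (fun y' : ℝ => x ^ 2 + y' ^ 2 - 2 * h) ((2:ℕ) * y ^ 1) y :=
    ((hasDerivAt_pow 2 y).const_add (x ^ 2)).sub_const (2 * h)
  rw [show (fun y' => -4 * Real.sqrt μ * y' / (x ^ 2 + y' ^ 2 - 2 * h)) = ((fun y' : ℝ => -4 * Real.sqrt μ * y') / fun y' : ℝ => x ^ 2 + y' ^ 2 - 2 * h) from rfl, (hu.div hv hne).deriv]
  field_simp
  try ring_nf
  try simp only [h3, hsq]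
  try ring


theorem gauss_curvature_akp_metric (μ h : ℝ) (hμ : 0 < μ) (hh : h < 0) :
    (∀ x y : ℝ, gaussCurv μ h x y = -(1 - μ) * (x ^ 2 - y ^ 2) - 2 * h * (1 + μ)) ∧
    ((∃ c : ℝ, ∀ x y : ℝ, gaussCurv μ h x y = c) ↔ μ = 1) ∧
    (μ = 1 → ∀ x y : ℝ, gaussCurv μ h x y = -4 * h) := by
  have hmain : ∀ x y : ℝ, gaussCurv μ h x y
      = -(1 - μ) * (x ^ 2 - y ^ 2) - 2 * h * (1 + μ) := by
    intro x y
    have hs : 0 < Real.sqrt μ := Real.sqrt_pos.2 hμ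
    have hsq : (Real.sqrt μ) ^ 2 = μ := Real.sq_sqrt hμ.le
    have h3 : Real.sqrt μ ^ 3 = Real.sqrt μ * μ := by rw [pow_succ, hsq, mul_comm]
    have hq := qpos hh x y
    unfold gaussCurv
    rw [sqrtEG hμ hh, Dx hμ hh, Dy hμ hh]
    field_simp
    try ring_nf
    try simp only [h3, hsq]
    try ring
  refine ⟨hmain, ?_, ?_⟩
  · constructor
    · rintro ⟨c, hc⟩
      have h1 := (hc 1 0).symm.trans (hmain 1 0)
      have h2 := (hc 0 0).symm.trans (hmain 0 0)
      nlinarith [h1, h2]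
    · rintro rfl
      exact ⟨-4 * h, fun x y => by rw [hmain]; ring⟩
  · rintro rfl x y
    rw [hmain]; ring
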